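/- Boundary behavior of the normalized nonlocal operator: let K : ℝ × ℝ → ℝ be continuous with K(x₀,x₀) > 0, and let φ : ℝ → ℝ be continuously differentiable in a neighborhood of x₀. Then the normalized left-handed part of the nonlocal derivative satisfies lim_{l → 0⁺} [ ∫_{x₀−l}^{x₀} K(x₀,t) φ′(t) dt ] / [ 2 ∫_{x₀−l}^{x₀} K(x₀,t) dt ] = (1/2) φ′(x₀). Hence, as the truncated horizon l⁻ shrinks to zero at a boundary point, the nonlocal derivative D̄φ(x₀) tends to (1/2) φ′(x₀) + c⁺ ∫_{x₀}^{x₀+l⁺} K(x₀,t) φ′(t) dt. -/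

import Mathlib

open MeasureTheory intervalIntegral Filter Topology

lemma avg_tendsto {f : ℝ → ℝ} {U : Set ℝ} (hU : IsOpen U) {x₀ : ℝ} (hx : x₀ ∈ U)
    (hf : ContinuousOn f U) :
    Tendsto (fun l : ℝ => (∫ t in (x₀ - l)..x₀, f t) / l) (𝓝[>] 0) (𝓝 (f x₀)) := by
  have hΨ : HasDerivAt (fun u => ∫ t in x₀..u, f t) (f x₀) x₀ := by
    apply intervalIntegral.integral_hasDerivAt_right
    · exact IntervalIntegrable.refl
    · exact ⟨U, hU.mem_nhds hx, (hf.aestronglyMeasurable hU.measurableSet)⟩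
    · exact hf.continuousAt (hU.mem_nhds hx)
  have hcomp : HasDerivAt (fun l : ℝ => x₀ - l) (-1) 0 := by
    simpa using (hasDerivAt_id (0:ℝ)).const_sub x₀
  have hΦ : HasDerivAt (fun l : ℝ => ∫ t in (x₀ - l)..x₀, f t) (f x₀) 0 := by
    have hΨ' : HasDerivAt (fun u => ∫ t in x₀..u, f t) (f x₀) ((fun l : ℝ => x₀ - l) 0) := by
      simpa using hΨ
    have h1 : HasDerivAt (fun l : ℝ => ∫ t in x₀..(x₀ - l), f t) (f x₀ * (-1)) 0 :=
      hΨ'.comp 0 hcomp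
    have h2 := h1.fun_neg
    have : (fun l : ℝ => -∫ t in x₀..(x₀ - l), f t)
        = fun l : ℝ => ∫ t in (x₀ - l)..x₀, f t := by
      funext l; rw [intervalIntegral.integral_symm, neg_neg]
    rw [this] at h2
    rw [show f x₀ = -(f x₀ * -1) by ring]; exact h2
  have hslope := hasDerivAt_iff_tendsto_slope.mp hΦ
  have hsub : 𝓝[>] (0:ℝ) ≤ 𝓝[≠] (0:ℝ) :=
    nhdsWithin_mono 0 (fun x hx => ne_of_gt hx)
  refine (hslope.mono_left hsub).congr' ?_
  filter_upwards [self_mem_nhdsWithin] with l hl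
  simp [slope_def_field]

/-- at a boundary point `x₀`, as the truncated (left) horizon `l` shrinks
to zero, the normalized left-handed part of the nonlocal derivative tends to
`(1/2) φ′(x₀)`, and the full nonlocal derivative tends to
`(1/2) φ′(x₀) + c⁺ ∫_{x₀}^{x₀+l⁺} K(x₀,t) φ′(t) dt`. -/
theorem stmt_4 (K : ℝ × ℝ → ℝ) (hK : Continuous K) (x₀ : ℝ) (hK0 : 0 < K (x₀, x₀))
    (φ : ℝ → ℝ) (hφ : ∃ s ∈ 𝓝 x₀, ContDiffOn ℝ 1 φ s) (cp lp : ℝ) (hlp : 0 < lp) :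
    Tendsto
      (fun l : ℝ => (∫ t in (x₀ - l)..x₀, K (x₀, t) * deriv φ t) /
        (2 * ∫ t in (x₀ - l)..x₀, K (x₀, t)))
      (𝓝[>] 0) (𝓝 ((1 / 2) * deriv φ x₀)) ∧
    Tendsto
      (fun l : ℝ =>
        (1 / (2 * ∫ t in (x₀ - l)..x₀, K (x₀, t))) *
            (∫ t in (x₀ - l)..x₀, K (x₀, t) * deriv φ t) +
          cp * ∫ t in x₀..(x₀ + lp), K (x₀, t) * deriv φ t)
      (𝓝[>] 0)
      (𝓝 ((1 / 2) * deriv φ x₀ + cp * ∫ t in x₀..(x₀ + lp), K (x₀, t) * deriv φ t)) := by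
  obtain ⟨s, hs, hφs⟩ := hφ
  set U := interior s with hUdef
  have hU : IsOpen U := isOpen_interior
  have hxU : x₀ ∈ U := mem_interior_iff_mem_nhds.mpr hs
  have hKx : Continuous (fun t : ℝ => K (x₀, t)) :=
    hK.comp (continuous_const.prodMk continuous_id)
  have hderiv : ContinuousOn (deriv φ) U :=
    (hφs.mono interior_subset).continuousOn_deriv_of_isOpen hU le_rfl
  have hf : ContinuousOn (fun t => K (x₀, t) * deriv φ t) U :=
    hKx.continuousOn.mul hderiv
  have h1 := avg_tendsto hU hxU hf
  have h2 := avg_tendsto hU hxU hKx.continuousOn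
  have h2' : Tendsto (fun l : ℝ => 2 * ((∫ t in (x₀ - l)..x₀, K (x₀, t)) / l)) (𝓝[>] 0)
      (𝓝 (2 * K (x₀, x₀))) := h2.const_mul 2
  have hne : (2 : ℝ) * K (x₀, x₀) ≠ 0 := by positivity
  have hdiv := h1.div h2' hne
  have key : ∀ a b l : ℝ, l ≠ 0 → (a / l) / (2 * (b / l)) = a / (2 * b) := by
    intro a b l hl
    rcases eq_or_ne b 0 with hb | hb
    · simp [hb]
    · field_simp
  have first : Tendsto
      (fun l : ℝ => (∫ t in (x₀ - l)..x₀, K (x₀, t) * deriv φ t) /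
        (2 * ∫ t in (x₀ - l)..x₀, K (x₀, t)))
      (𝓝[>] 0) (𝓝 ((1 / 2) * deriv φ x₀)) := by
    have heq : (1 / 2 : ℝ) * deriv φ x₀
        = (K (x₀, x₀) * deriv φ x₀) / (2 * K (x₀, x₀)) := by
      field_simp
    rw [heq]
    refine hdiv.congr' ?_
    filter_upwards [self_mem_nhdsWithin] with l hl
    exact key _ _ l (ne_of_gt hl)
  refine ⟨first, ?_⟩
  have := first.add (tendsto_const_nhds
    (x := cp * ∫ t in x₀..(x₀ + lp), K (x₀, t) * deriv φ t) (f := 𝓝[>] (0:ℝ)))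
  refine this.congr ?_
  intro l
  rw [one_div_mul_eq_div]
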